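/- Let ε ∈ (0,1), δ ∈ (0,1), and set M = 1 + (2/ε)·log(max(1/δ, 1/ε)). Define q(t) = exp(ε(t − M)/2)/(exp(ε(t − M)/2) + 1). Then: (i) q(0) ≤ δ·e^{−ε/2}; (ii) q(1) ≤ δ; (iii) for every g ≥ 2M, 1 − q(g) ≤ δ; and (iv) e^ε·(1 − q(1)) = e^ε · exp(ε(M−1)/2)/(exp(ε(M−1)/2) + 1) ≥ 1. -/

import Mathlib

open MeasureTheory ProbabilityTheory Matrix
open scoped Classical NNReal ENNReal RealInnerProductSpace

noncomputable section

namespace EPTR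

variable {Z : Type*}

/-- Hamming distance between two datasets of size `n`. -/
def hDist {n : ℕ} (X X' : Fin n → Z) : ℕ :=
  (Finset.univ.filter fun i => X i ≠ X' i).card

/-- Two datasets are neighbors if they differ in exactly one coordinate. -/
def Neighbor {n : ℕ} (X X' : Fin n → Z) : Prop := hDist X X' = 1

/-- Gaussian measure on Euclidean space with mean `m` and covariance `v • I`
(the product of one-dimensional Gaussians of variance `v`). -/
def gaussianE {ι : Type*} [Fintype ι] (m : EuclideanSpace ℝ ι) (v : ℝ≥0) :
    Measure (EuclideanSpace ℝ ι) :=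
  (Measure.pi fun i => gaussianReal (m i) v).map (MeasurableEquiv.toLp 2 (ι → ℝ))

/-- The threshold shift `M = 1 + (2/ε) log (max (1/δ) (1/ε))` of the ePTR mechanism. -/
def Mshift (ε δ : ℝ) : ℝ := 1 + 2 / ε * Real.log (max (1 / δ) (1 / ε))

/-- The release probability of the ePTR mechanism at sub-distance value `g`. -/
def relProb (ε δ g : ℝ) : ℝ :=
  Real.exp (ε * (g - Mshift ε δ) / 2) / (Real.exp (ε * (g - Mshift ε δ) / 2) + 1)

/-- The standard deviation `s = (2α/ε)√(2 log(1.25/δ))` of the ePTR Gaussian noise. -/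
def noiseSD (ε δ α : ℝ) : ℝ := 2 * α / ε * Real.sqrt (2 * Real.log (1.25 / δ))

/-- Output distribution of the ePTR mechanism on input dataset `X`
(Euclidean-space valued version). -/
def ePTR {n : ℕ} {ι : Type*} [Fintype ι] (ε δ α : ℝ)
    (θhat : (Fin n → Z) → EuclideanSpace ℝ ι) (γ : (Fin n → Z) → ℝ)
    (πbot : Measure (EuclideanSpace ℝ ι)) (X : Fin n → Z) :
    Measure (EuclideanSpace ℝ ι) :=
  ENNReal.ofReal (relProb ε δ (γ X)) • gaussianE (θhat X) (Real.toNNReal (noiseSD ε δ α ^ 2))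
    + ENNReal.ofReal (1 - relProb ε δ (γ X)) • πbot

/-- Output distribution of the ePTR mechanism on input dataset `X` (real valued version). -/
def ePTR1 {n : ℕ} (ε δ α : ℝ)
    (θhat : (Fin n → Z) → ℝ) (γ : (Fin n → Z) → ℝ)
    (πbot : Measure ℝ) (X : Fin n → Z) : Measure ℝ :=
  ENNReal.ofReal (relProb ε δ (γ X)) • gaussianReal (θhat X) (Real.toNNReal (noiseSD ε δ α ^ 2))
    + ENNReal.ofReal (1 - relProb ε δ (γ X)) • πbot

/-- `(ε, δ)`-differential privacy of a mechanism: for all neighboring datasets `X, X'`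
and all measurable events `B`, `μ_X(B) ≤ e^ε μ_{X'}(B) + δ`. -/
def IsDP {n : ℕ} {Ω : Type*} [MeasurableSpace Ω]
    (mech : (Fin n → Z) → Measure Ω) (ε δ : ℝ) : Prop :=
  ∀ X X' : Fin n → Z, Neighbor X X' → ∀ B : Set Ω, MeasurableSet B →
    mech X B ≤ ENNReal.ofReal (Real.exp ε) * mech X' B + ENNReal.ofReal δ

/-- Projection onto the closed ball of radius `a` in a normed space:
`proj a v = (a / max ‖v‖ a) • v`. -/
def proj {V : Type*} [NormedAddCommGroup V] [Module ℝ V] (a : ℝ) (v : V) : V :=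
  (a / max ‖v‖ a) • v

/-- Identification of `Fin p → ℝ` with Euclidean space. -/
def toE {p : ℕ} : (Fin p → ℝ) → EuclideanSpace ℝ (Fin p) :=
  ⇑(EuclideanSpace.equiv (Fin p) ℝ).symm

/-- ℓ²-operator norm of a square matrix. -/
def opNorm {p : ℕ} (A : Matrix (Fin p) (Fin p) ℝ) : ℝ :=
  ‖Matrix.toEuclideanCLM (𝕜 := ℝ) A‖

/-- Smallest eigenvalue of a (symmetric) matrix, via the Rayleigh quotient. -/
def lambdaMin {p : ℕ} (A : Matrix (Fin p) (Fin p) ℝ) : ℝ :=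
  ⨅ v : Metric.sphere (0 : EuclideanSpace ℝ (Fin p)) 1,
    ⟪Matrix.toEuclideanCLM (𝕜 := ℝ) A v.1, v.1⟫

/-- Index set of data points carrying label `k`. -/
def Ik {n K : ℕ} {E : Type*} (X : Fin n → E × Fin K) (k : Fin K) : Finset (Fin n) :=
  Finset.univ.filter fun j => (X j).2 = k

/-- Class-`k` sample frequency `μ̂_k = |I_k| / n`. -/
def classFreq {n K : ℕ} {E : Type*} (X : Fin n → E × Fin K) (k : Fin K) : ℝ :=
  (Ik X k).card / n

/-- Class-`k` sample mean (equal to `0` if the class is empty). -/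
def classMean {n K p : ℕ} (X : Fin n → EuclideanSpace ℝ (Fin p) × Fin K) (k : Fin K) :
    EuclideanSpace ℝ (Fin p) :=
  ((Ik X k).card : ℝ)⁻¹ • ∑ j ∈ Ik X k, (X j).1

/-- The sub-distance of the ePTR Bayes classifier:
`γ(X) = max(min_k |I_k(X)| - c₀ n - 1, 0)`. -/
def gammaBC {n K : ℕ} {E : Type*} (c0 : ℝ) (X : Fin n → E × Fin K) : ℝ :=
  max (((⨅ k : Fin K, (Ik X k).card : ℕ) : ℝ) - c0 * n - 1) 0

end EPTR

/-- The four scalar facts about the ePTR release probability `q(t) = relProb ε δ t` with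
threshold shift `M = Mshift ε δ`: (i) `q(0) ≤ δ e^{-ε/2}`; (ii) `q(1) ≤ δ`;
(iii) `1 - q(g) ≤ δ` whenever `g ≥ 2M`; (iv) `e^ε (1 - q(1))` equals
`e^ε exp(ε(M-1)/2)/(exp(ε(M-1)/2)+1)` and is at least `1`. -/
theorem relProb_facts {ε δ : ℝ} (hε : ε ∈ Set.Ioo (0 : ℝ) 1) (hδ : δ ∈ Set.Ioo (0 : ℝ) 1) :
    EPTR.relProb ε δ 0 ≤ δ * Real.exp (-(ε / 2)) ∧
      EPTR.relProb ε δ 1 ≤ δ ∧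
      (∀ g : ℝ, 2 * EPTR.Mshift ε δ ≤ g → 1 - EPTR.relProb ε δ g ≤ δ) ∧
      Real.exp ε * (1 - EPTR.relProb ε δ 1)
          = Real.exp ε * (Real.exp (ε * (EPTR.Mshift ε δ - 1) / 2)
              / (Real.exp (ε * (EPTR.Mshift ε δ - 1) / 2) + 1)) ∧
      1 ≤ Real.exp ε * (1 - EPTR.relProb ε δ 1) := by
  obtain ⟨hε0, hε1⟩ := hε
  obtain ⟨hδ0, hδ1⟩ := hδ
  set m : ℝ := max (1 / δ) (1 / ε) with hm
  have hm1 : 1 < m := lt_max_of_lt_right (one_lt_one_div hε0 hε1)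
  have hm0 : 0 < m := lt_trans one_pos hm1
  set L : ℝ := Real.log m with hL
  have hL0 : 0 < L := Real.log_pos hm1
  have hexpL : Real.exp L = m := Real.exp_log hm0
  have hmδ : m⁻¹ ≤ δ := by
    rw [inv_le_comm₀ hm0 hδ0, ← one_div]
    exact le_max_left _ _
  have hmε : ε⁻¹ ≤ m := by rw [← one_div]; exact le_max_right _ _
  have hM : EPTR.Mshift ε δ = 1 + 2 / ε * L := rfl
  -- exponents
  have h1 : ε * ((1 : ℝ) - EPTR.Mshift ε δ) / 2 = -L := by
    rw [hM]; field_simp; ring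
  have h0 : ε * ((0 : ℝ) - EPTR.Mshift ε δ) / 2 = -L - ε / 2 := by
    rw [hM]; field_simp; ring
  have hq_le : ∀ x : ℝ, Real.exp x / (Real.exp x + 1) ≤ Real.exp x := by
    intro x
    have h1x : (1 : ℝ) ≤ Real.exp x + 1 := by linarith [Real.exp_pos x]
    calc Real.exp x / (Real.exp x + 1) ≤ Real.exp x / 1 :=
          div_le_div_of_nonneg_left (Real.exp_pos x).le one_pos h1x
      _ = Real.exp x := div_one _
  have hexpnegL : Real.exp (-L) ≤ δ := by
    rw [Real.exp_neg, hexpL]; exact hmδ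
  refine ⟨?_, ?_, ?_, ?_, ?_⟩
  · -- (i)
    unfold EPTR.relProb
    rw [h0]
    calc Real.exp (-L - ε / 2) / (Real.exp (-L - ε / 2) + 1)
        ≤ Real.exp (-L - ε / 2) := hq_le _
      _ = Real.exp (-L) * Real.exp (-(ε / 2)) := by rw [← Real.exp_add]; ring_nf
      _ ≤ δ * Real.exp (-(ε / 2)) :=
          mul_le_mul_of_nonneg_right hexpnegL (Real.exp_pos _).le
  · -- (ii)
    unfold EPTR.relProb
    rw [h1]
    exact (hq_le _).trans hexpnegL
  · -- (iii)
    intro g hg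
    unfold EPTR.relProb
    set x := ε * (g - EPTR.Mshift ε δ) / 2 with hx
    have hex : 0 < Real.exp x + 1 := by positivity
    have h1q : 1 - Real.exp x / (Real.exp x + 1) = (Real.exp x + 1)⁻¹ := by
      field_simp
      ring
    rw [h1q]
    have hMpos : 0 < EPTR.Mshift ε δ := by
      rw [hM]; positivity
    have hxge : ε * EPTR.Mshift ε δ / 2 ≤ x := by
      rw [hx]
      have : EPTR.Mshift ε δ ≤ g - EPTR.Mshift ε δ := by linarith
      nlinarith
    have hLle : L ≤ x := by
      have : L ≤ ε * EPTR.Mshift ε δ / 2 := by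
        rw [hM]; field_simp; nlinarith
      linarith
    calc (Real.exp x + 1)⁻¹ ≤ (Real.exp x)⁻¹ := by
          apply inv_anti₀ (Real.exp_pos x)
          linarith
      _ = Real.exp (-x) := (Real.exp_neg x).symm
      _ ≤ Real.exp (-L) := Real.exp_le_exp.2 (by linarith)
      _ ≤ δ := hexpnegL
  · -- (iv) equality
    unfold EPTR.relProb
    rw [h1]
    have hML : ε * (EPTR.Mshift ε δ - 1) / 2 = L := by
      rw [hM]; field_simp
      ring
    rw [hML]
    have hen : 0 < Real.exp (-L) + 1 := by positivity
    have heL : 0 < Real.exp L + 1 := by positivity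
    congr 1
    rw [Real.exp_neg]
    have hEp := Real.exp_pos L
    field_simp
    ring
  · -- (iv) inequality
    unfold EPTR.relProb
    rw [h1]
    have hEp := Real.exp_pos L
    have hen : 0 < Real.exp (-L) + 1 := by positivity
    have h1q : 1 - Real.exp (-L) / (Real.exp (-L) + 1) = (Real.exp (-L) + 1)⁻¹ := by
      field_simp
      ring
    rw [h1q]
    rw [Real.exp_neg]
    have hkey : Real.exp L + 1 ≤ Real.exp ε * Real.exp L := by
      have h1 : (1 : ℝ) + ε ≤ Real.exp ε := by
        have := Real.add_one_le_exp ε; linarith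
      have h2 : ε⁻¹ ≤ Real.exp L := by rw [hexpL]; exact hmε
      have h3 : 1 ≤ ε * Real.exp L := by
        have := mul_le_mul_of_nonneg_left h2 hε0.le
        rwa [mul_inv_cancel₀ hε0.ne'] at this
      nlinarith
    have hrw : (Real.exp L)⁻¹ + 1 = (Real.exp L + 1) / Real.exp L := by
      field_simp
      ring
    rw [hrw, inv_div, mul_div_assoc', one_le_div (by positivity)]
    exact hkey
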